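/- arXiv:0904.2018 — 5 statements merged into one kernel-verified Lean document; each statement's English description precedes it below -/
import Mathlib

section
/- For any sum Z = X_1 + ... + X_n of (possibly dependent) nonnegative real random variables, the complementary CDF of Z satisfies F̄_Z(z) ≤ (F̄_{X_1} ⊗ ... ⊗ F̄_{X_n})(z) for all z ≥ 0, where ⊗ denotes min-plus convolution: (f ⊗ g)(z) = inf_{0 ≤ y ≤ z} [f(y) + g(z−y)] (the right-hand side may exceed 1, in which case the bound is trivial). -/
open MeasureTheory

/-- Min-plus convolution of `n` functions: infimum over all nonnegative
decompositions `z = y 1 + ... + y n` of the sum of the values. -/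
noncomputable def minplusN (n : ℕ) (f : Fin n → ℝ → ℝ) (z : ℝ) : ℝ :=
  ⨅ y : {y : Fin n → ℝ // (∀ i, 0 ≤ y i) ∧ ∑ i, y i = z},
    ∑ i, f i (y.1 i)

/-- Complementary CDF of a random variable `X` under `P`. -/
noncomputable def ccdf {Ω : Type*} [MeasurableSpace Ω] (P : Measure Ω)
    (X : Ω → ℝ) (z : ℝ) : ℝ := (P {ω | X ω > z}).toReal

theorem stmt_0 {Ω : Type*} [MeasurableSpace Ω] (P : Measure Ω)
    [IsProbabilityMeasure P] (n : ℕ) (X : Fin n → Ω → ℝ)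
    (hmeas : ∀ i, Measurable (X i)) (hnonneg : ∀ i ω, 0 ≤ X i ω)
    (Z : Ω → ℝ) (hZ : Z = fun ω => ∑ i, X i ω) :
    ∀ z : ℝ, 0 ≤ z → ccdf P Z z ≤ minplusN n (fun i => ccdf P (X i)) z := by
  intro z hz
  subst hZ
  by_cases hne : Nonempty {y : Fin n → ℝ // (∀ i, 0 ≤ y i) ∧ ∑ i, y i = z}
  · apply le_ciInf
    rintro ⟨y, hy0, hysum⟩
    have hsub : {ω | (∑ i, X i ω) > z} ⊆ ⋃ i, {ω | X i ω > y i} := by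
      intro ω hω
      by_contra h
      simp only [Set.mem_iUnion, Set.mem_setOf_eq, not_exists, not_lt] at h
      have : ∑ i, X i ω ≤ ∑ i, y i := Finset.sum_le_sum fun i _ => h i
      rw [hysum] at this
      exact absurd hω (not_lt.mpr this)
    have h1 : P {ω | (∑ i, X i ω) > z} ≤ ∑ i, P {ω | X i ω > y i} :=
      (measure_mono hsub).trans (measure_iUnion_fintype_le _ _)
    have hfin : (∑ i, P {ω | X i ω > y i}) ≠ ⊤ :=
      ENNReal.sum_ne_top.mpr fun i _ => measure_ne_top P _
    calc ccdf P (fun ω => ∑ i, X i ω) z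
        = (P {ω | (∑ i, X i ω) > z}).toReal := rfl
      _ ≤ (∑ i, P {ω | X i ω > y i}).toReal := ENNReal.toReal_mono hfin h1
      _ = ∑ i, (P {ω | X i ω > y i}).toReal :=
          ENNReal.toReal_sum fun i _ => measure_ne_top P _
      _ = ∑ i, ccdf P (X i) (y i) := rfl
  · haveI : IsEmpty {y : Fin n → ℝ // (∀ i, 0 ≤ y i) ∧ ∑ i, y i = z} :=
      not_nonempty_iff.mp hne
    rw [minplusN, Real.iInf_of_isEmpty]
    -- the index type is empty, so n = 0 and z > 0 is impossible unless the LHS is 0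
    have hn : n = 0 := by
      by_contra hn0
      exact hne ⟨⟨fun i => if i = ⟨0, Nat.pos_of_ne_zero hn0⟩ then z else 0,
        fun i => by dsimp only; split_ifs <;> simp [hz],
        by simp [Finset.sum_ite_eq']⟩⟩
    subst hn
    have hzpos : 0 < z := by
      rcases lt_or_eq_of_le hz with h | h
      · exact h
      · exact absurd ⟨⟨fun i => 0, fun i => le_refl 0, by simp [← h]⟩⟩ hne
    have : {ω | (∑ i : Fin 0, X i ω) > z} = ∅ := by
      ext ω; simp; linarith
    simp only [ccdf]
    rw [show {ω | (fun ω => ∑ i : Fin 0, X i ω) ω > z} = ∅ from this]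
    simp
end

section
/- Let A : ℝ≥0 → ℝ≥0 be a nonnegative wide-sense increasing function with A(0) = 0, let α be nonnegative wide-sense increasing, and fix x ≥ 0. Then the following are equivalent: (a) for all 0 ≤ s ≤ t, A(t) − A(s) ≤ α(t−s) + x; (b) for all t ≥ 0, A(t) ≤ (A ⊗ α)(t) + x, where (A ⊗ α)(t) = inf_{0 ≤ s ≤ t} [A(s) + α(t−s)]. -/
theorem stmt_1 (A α : ℝ → ℝ)
    (hA_mono : ∀ ⦃s t : ℝ⦄, 0 ≤ s → s ≤ t → A s ≤ A t)
    (hA_nonneg : ∀ t, 0 ≤ t → 0 ≤ A t) (hA0 : A 0 = 0)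
    (hα_mono : ∀ ⦃s t : ℝ⦄, 0 ≤ s → s ≤ t → α s ≤ α t)
    (hα_nonneg : ∀ t, 0 ≤ t → 0 ≤ α t)
    (x : ℝ) (hx : 0 ≤ x) :
    (∀ s t : ℝ, 0 ≤ s → s ≤ t → A t - A s ≤ α (t - s) + x) ↔
      (∀ t : ℝ, 0 ≤ t →
        A t ≤ (⨅ s : Set.Icc (0 : ℝ) t, (A s.1 + α (t - s.1))) + x) := by
  constructor
  · intro h t ht
    have hne : Nonempty (Set.Icc (0 : ℝ) t) := ⟨⟨0, le_refl 0, ht⟩⟩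
    rw [← sub_le_iff_le_add]
    refine le_ciInf fun s => ?_
    have hs0 : (0:ℝ) ≤ s.1 := s.2.1
    have hst : s.1 ≤ t := s.2.2
    have := h s.1 t hs0 hst
    linarith
  · intro h s t hs hst
    have ht : (0:ℝ) ≤ t := hs.trans hst
    have hne : Nonempty (Set.Icc (0 : ℝ) t) := ⟨⟨0, le_refl 0, ht⟩⟩
    have hbdd : BddBelow (Set.range fun s : Set.Icc (0:ℝ) t => A s.1 + α (t - s.1)) := by
      refine ⟨0, ?_⟩
      rintro _ ⟨u, rfl⟩
      have := hA_nonneg u.1 u.2.1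
      have := hα_nonneg (t - u.1) (by linarith [u.2.2])
      positivity
    have hle := ciInf_le hbdd (⟨s, hs, hst⟩ : Set.Icc (0:ℝ) t)
    have := h t ht
    simp only at hle
    linarith
end

section
/- A flow that is GCRA(T, τ)-constrained has a time-domain deterministic arrival curve λ(n) = (T·n − τ)⁺; that is, its packet arrival times satisfy a(n) − a(m) ≥ (T·(n−m) − τ)⁺ for all 0 ≤ m ≤ n. -/
/-- Theoretical arrival time of the GCRA(T,·) algorithm:
`TAT(0) = a(0)`, `TAT(n+1) = max(a(n), TAT(n)) + T`. -/
noncomputable def TAT (a : ℕ → ℝ) (T : ℝ) : ℕ → ℝ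
  | 0 => a 0
  | n + 1 => max (a n) (TAT a T n) + T

lemma TAT_lb (a : ℕ → ℝ) (T : ℝ) (m : ℕ) :
    ∀ n, m < n → TAT a T n ≥ a m + T * ((n : ℝ) - (m : ℝ)) := by
  intro n
  induction n with
  | zero => omega
  | succ k ih =>
    intro hmk
    have hdef : TAT a T (k + 1) = max (a k) (TAT a T k) + T := rfl
    rcases Nat.lt_succ_iff_lt_or_eq.mp hmk with h | h
    · have hk := ih h
      have h2 : TAT a T (k + 1) ≥ TAT a T k + T := by
        rw [hdef]; linarith [le_max_right (a k) (TAT a T k)]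
      push_cast
      linarith
    · subst h
      rw [hdef]
      push_cast
      linarith [le_max_left (a m) (TAT a T m)]

theorem stmt_6 (a : ℕ → ℝ) (T τ : ℝ) (hT : 0 < T) (hτ : 0 ≤ τ)
    (ha_mono : Monotone a)
    (hconform : ∀ n : ℕ, a n ≥ TAT a T n - τ) :
    ∀ m n : ℕ, m ≤ n → a n - a m ≥ max 0 (T * ((n : ℝ) - (m : ℝ)) - τ) := by
  intro m n hmn
  have h0 : a m ≤ a n := ha_mono hmn
  rcases eq_or_lt_of_le hmn with h | h
  · subst h
    apply max_le <;> simp <;> linarith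
  · have h1 := TAT_lb a T m n h
    have h2 := hconform n
    apply max_le <;> linarith
end

section
/- Output characterization: Suppose a system provides an i.d stochastic service curve γ ∈ G with bounding function j ∈ Ḡ to an input with v.s.d stochastic arrival curve λ ∈ G with bounding function h ∈ Ḡ. Then the departure process d(n) has an i.a.t stochastic arrival curve (λ ⊘̄ γ)(n−m) with bounding function (j ⊗ h)(x): for all 0 ≤ m ≤ n and x ≥ 0, P{ (λ ⊘̄ γ)(n−m) − [d(n) − d(m)] > x } ≤ (j ⊗ h)(x), where (λ ⊘̄ γ)(k) = inf_{v ≥ 0}[λ(k + v) − γ(v)]. -/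
open MeasureTheory

/-- Max-plus convolution of two sequences. -/
noncomputable def maxplus (f g : ℕ → ℝ) (n : ℕ) : ℝ :=
  (Finset.Iic n).sup' Finset.nonempty_Iic (fun m => f m + g (n - m))

/-- Min-plus convolution of two real functions. -/
noncomputable def minplus (f g : ℝ → ℝ) (z : ℝ) : ℝ :=
  ⨅ y : Set.Icc (0 : ℝ) z, (f y.1 + g (z - y.1))

/-- Max-plus deconvolution of two sequences: `(f ⊘̄ g)(k) = inf_{v ≥ 0}[f(k+v) − g(v)]`. -/
noncomputable def maxdeconv (f g : ℕ → ℝ) (k : ℕ) : ℝ :=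
  ⨅ v : ℕ, (f (k + v) - g v)

theorem stmt_17 {Ω : Type*} [MeasurableSpace Ω] (P : Measure Ω)
    [IsProbabilityMeasure P]
    (a d : ℕ → Ω → ℝ) (ha_meas : ∀ n, Measurable (a n))
    (hd_meas : ∀ n, Measurable (d n))
    (ha_mono : ∀ ω, Monotone fun n => a n ω)
    (hd_mono : ∀ ω, Monotone fun n => d n ω)
    (had : ∀ n ω, a n ω ≤ d n ω)
    (γ : ℕ → ℝ) (hγ_mono : Monotone γ) (hγ_nonneg : ∀ n, 0 ≤ γ n)
    (lam : ℕ → ℝ) (hlam_mono : Monotone lam) (hlam_nonneg : ∀ n, 0 ≤ lam n)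
    (j : ℝ → ℝ) (hj_anti : Antitone j) (hj_nonneg : ∀ x, 0 ≤ j x)
    (h : ℝ → ℝ) (hh_anti : Antitone h) (hh_nonneg : ∀ x, 0 ≤ h x)
    (hid : ∀ n : ℕ, ∀ x : ℝ, 0 ≤ x →
      (P {ω | d n ω - maxplus (fun k => a k ω) γ n > x}).toReal ≤ j x)
    (hvsd : ∀ n : ℕ, ∀ x : ℝ, 0 ≤ x →
      (P {ω | (Finset.Iic n).sup' Finset.nonempty_Iic
          (fun m => lam (n - m) - (a n ω - a m ω)) > x}).toReal ≤ h x) :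
    ∀ m n : ℕ, m ≤ n → ∀ x : ℝ, 0 ≤ x →
      (P {ω | maxdeconv lam γ (n - m) - (d n ω - d m ω) > x}).toReal
        ≤ minplus j h x := by
  intro m n hmn x hx
  have hnonneg_minplus : ∀ c : ℝ, (∀ y : Set.Icc (0:ℝ) x, c ≤ j y.1 + h (x - y.1)) →
      c ≤ minplus j h x := by
    intro c hc
    have hne : Nonempty (Set.Icc (0:ℝ) x) := ⟨⟨0, le_refl 0, hx⟩⟩
    exact le_ciInf hc
  by_cases hbd : BddBelow (Set.range fun v => lam ((n - m) + v) - γ v)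
  · -- main case
    have key : ∀ ω, maxdeconv lam γ (n - m) - (d n ω - d m ω) ≤
        (d m ω - maxplus (fun k => a k ω) γ m) +
        (Finset.Iic n).sup' Finset.nonempty_Iic (fun k => lam (n - k) - (a n ω - a k ω)) := by
      intro ω
      obtain ⟨v, hvmem, hv⟩ := Finset.exists_mem_eq_sup' (Finset.nonempty_Iic (a := m))
        (fun k => a k ω + γ (m - k))
      have hvm : v ≤ m := Finset.mem_Iic.mp hvmem
      have h1 : maxdeconv lam γ (n - m) ≤ lam ((n - m) + (m - v)) - γ (m - v) :=
        ciInf_le hbd (m - v)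
      have harith : (n - m) + (m - v) = n - v := by omega
      have h2 : lam (n - v) - (a n ω - a v ω) ≤
          (Finset.Iic n).sup' Finset.nonempty_Iic (fun k => lam (n - k) - (a n ω - a k ω)) :=
        Finset.le_sup' (fun k => lam (n - k) - (a n ω - a k ω)) (Finset.mem_Iic.mpr (hvm.trans hmn))
      have h3 : a n ω ≤ d n ω := had n ω
      have h4 : maxplus (fun k => a k ω) γ m = a v ω + γ (m - v) := hv
      rw [harith] at h1
      linarith
    have hne : Nonempty (Set.Icc (0:ℝ) x) := ⟨⟨0, le_refl 0, hx⟩⟩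
    apply hnonneg_minplus
    rintro ⟨y, hy0, hyx⟩
    simp only
    set A := {ω | d m ω - maxplus (fun k => a k ω) γ m > y}
    set B := {ω | (Finset.Iic n).sup' Finset.nonempty_Iic
        (fun k => lam (n - k) - (a n ω - a k ω)) > x - y}
    have hsub : {ω | maxdeconv lam γ (n - m) - (d n ω - d m ω) > x} ⊆ A ∪ B := by
      intro ω hω
      by_contra hc
      simp only [Set.mem_union, not_or] at hc
      have hA : ¬ (d m ω - maxplus (fun k => a k ω) γ m > y) := hc.1
      have hB : ¬ ((Finset.Iic n).sup' Finset.nonempty_Iic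
          (fun k => lam (n - k) - (a n ω - a k ω)) > x - y) := hc.2
      push_neg at hA hB
      have := key ω
      have hω' : maxdeconv lam γ (n - m) - (d n ω - d m ω) > x := hω
      linarith
    have hPA : P A ≠ ⊤ := measure_ne_top P A
    have hPB : P B ≠ ⊤ := measure_ne_top P B
    calc (P {ω | maxdeconv lam γ (n - m) - (d n ω - d m ω) > x}).toReal
        ≤ (P (A ∪ B)).toReal := by
          apply ENNReal.toReal_mono (measure_ne_top P _) (measure_mono hsub)
      _ ≤ ((P A) + (P B)).toReal := by
          apply ENNReal.toReal_mono (by finiteness) (measure_union_le A B)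
      _ = (P A).toReal + (P B).toReal := ENNReal.toReal_add hPA hPB
      _ ≤ j y + h (x - y) := add_le_add (hid m y hy0) (hvsd n (x - y) (by linarith))
  · -- degenerate case: the infimum is 0 by junk value, event is empty
    have hinf : maxdeconv lam γ (n - m) = 0 := by
      unfold maxdeconv
      exact Real.iInf_of_not_bddBelow hbd
    have hempty : {ω | maxdeconv lam γ (n - m) - (d n ω - d m ω) > x} = ∅ := by
      ext ω
      simp only [Set.mem_setOf_eq, Set.mem_empty_iff_false, iff_false, not_lt, hinf]
      have : d m ω ≤ d n ω := hd_mono ω hmn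
      linarith
    rw [hempty]
    simp only [measure_empty, ENNReal.toReal_zero]
    apply hnonneg_minplus
    rintro ⟨y, hy0, hyx⟩
    have := hj_nonneg y
    have := hh_nonneg (x - y)
    simp only
    linarith
end

section
/- Concatenation property (two nodes, deterministic core lemma): Let a flow traverse node 1 then node 2, with a = a¹, d¹ = a², d = d². Then for all n ≥ 0, sup_{0≤m≤n} [ d(m) − (a ⊗̄ γ¹ ⊗̄ γ²)(m) ] ≤ sup_{0≤k≤n} [ d¹(k) − (a¹ ⊗̄ γ¹)(k) ] + sup_{0≤m≤n} [ d²(m) − (a² ⊗̄ γ²)(m) ]. Consequently, if node i provides a c.s stochastic service curve γⁱ with bounding function jⁱ ∈ Ḡ (i = 1, 2), the tandem network provides a c.s stochastic service curve γ¹ ⊗̄ γ² with bounding function j¹ ⊗ j². -/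
open MeasureTheory

theorem stmt_18 {Ω : Type*} [MeasurableSpace Ω] (P : Measure Ω)
    [IsProbabilityMeasure P]
    (a d1 d2 : ℕ → Ω → ℝ)
    (ha_meas : ∀ n, Measurable (a n)) (hd1_meas : ∀ n, Measurable (d1 n))
    (hd2_meas : ∀ n, Measurable (d2 n))
    (ha_mono : ∀ ω, Monotone fun n => a n ω)
    (hd1_mono : ∀ ω, Monotone fun n => d1 n ω)
    (hd2_mono : ∀ ω, Monotone fun n => d2 n ω)
    (had1 : ∀ n ω, a n ω ≤ d1 n ω) (hd1d2 : ∀ n ω, d1 n ω ≤ d2 n ω)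
    (γ1 γ2 : ℕ → ℝ) (hγ1_mono : Monotone γ1) (hγ1_nonneg : ∀ n, 0 ≤ γ1 n)
    (hγ2_mono : Monotone γ2) (hγ2_nonneg : ∀ n, 0 ≤ γ2 n)
    (j1 j2 : ℝ → ℝ) (hj1_anti : Antitone j1) (hj1_nonneg : ∀ x, 0 ≤ j1 x)
    (hj2_anti : Antitone j2) (hj2_nonneg : ∀ x, 0 ≤ j2 x)
    (hcs1 : ∀ n : ℕ, ∀ x : ℝ, 0 ≤ x →
      (P {ω | (Finset.Iic n).sup' Finset.nonempty_Iic
          (fun m => d1 m ω - maxplus (fun k => a k ω) γ1 m) > x}).toReal ≤ j1 x)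
    (hcs2 : ∀ n : ℕ, ∀ x : ℝ, 0 ≤ x →
      (P {ω | (Finset.Iic n).sup' Finset.nonempty_Iic
          (fun m => d2 m ω - maxplus (fun k => d1 k ω) γ2 m) > x}).toReal
        ≤ j2 x) :
    (∀ ω : Ω, ∀ n : ℕ,
      (Finset.Iic n).sup' Finset.nonempty_Iic
          (fun m => d2 m ω - maxplus (fun k => a k ω) (maxplus γ1 γ2) m)
        ≤ (Finset.Iic n).sup' Finset.nonempty_Iic
            (fun k => d1 k ω - maxplus (fun i => a i ω) γ1 k)
          + (Finset.Iic n).sup' Finset.nonempty_Iic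
              (fun m => d2 m ω - maxplus (fun k => d1 k ω) γ2 m)) ∧
    (∀ n : ℕ, ∀ x : ℝ, 0 ≤ x →
      (P {ω | (Finset.Iic n).sup' Finset.nonempty_Iic
          (fun m => d2 m ω - maxplus (fun k => a k ω) (maxplus γ1 γ2) m)
            > x}).toReal
        ≤ minplus j1 j2 x) := by

  have key : ∀ ω : Ω, ∀ n : ℕ,
      (Finset.Iic n).sup' Finset.nonempty_Iic
          (fun m => d2 m ω - maxplus (fun k => a k ω) (maxplus γ1 γ2) m)
        ≤ (Finset.Iic n).sup' Finset.nonempty_Iic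
            (fun k => d1 k ω - maxplus (fun i => a i ω) γ1 k)
          + (Finset.Iic n).sup' Finset.nonempty_Iic
              (fun m => d2 m ω - maxplus (fun k => d1 k ω) γ2 m) := by
    intro ω n
    apply Finset.sup'_le
    intro m hm
    simp only [Finset.mem_Iic] at hm
    obtain ⟨k, hk, hkeq⟩ := Finset.exists_mem_eq_sup' (Finset.nonempty_Iic (a := m))
      (fun k => d1 k ω + γ2 (m - k))
    simp only [Finset.mem_Iic] at hk
    obtain ⟨j, hj, hjeq⟩ := Finset.exists_mem_eq_sup' (Finset.nonempty_Iic (a := k))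
      (fun j => a j ω + γ1 (k - j))
    simp only [Finset.mem_Iic] at hj
    have hT : a j ω + γ1 (k - j) + γ2 (m - k)
        ≤ maxplus (fun i => a i ω) (maxplus γ1 γ2) m := by
      have h1 : γ1 (k - j) + γ2 (m - k) ≤ maxplus γ1 γ2 (m - j) := by
        have := Finset.le_sup' (f := fun i => γ1 i + γ2 (m - j - i))
          (Finset.mem_Iic.mpr (show k - j ≤ m - j by omega))
        have heq : m - j - (k - j) = m - k := by omega
        rw [heq] at this
        exact this
      have := Finset.le_sup' (f := fun i => a i ω + maxplus γ1 γ2 (m - i))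
        (Finset.mem_Iic.mpr (show j ≤ m by omega))
      calc a j ω + γ1 (k - j) + γ2 (m - k) = a j ω + (γ1 (k - j) + γ2 (m - k)) := by ring
        _ ≤ a j ω + maxplus γ1 γ2 (m - j) := by linarith
        _ ≤ _ := this
    have h2 : d1 k ω + γ2 (m - k) ≤ maxplus (fun i => d1 i ω) γ2 m :=
      Finset.le_sup' (f := fun i => d1 i ω + γ2 (m - i)) (Finset.mem_Iic.mpr hk)
    have hS1 : d1 k ω - maxplus (fun i => a i ω) γ1 k
        ≤ (Finset.Iic n).sup' Finset.nonempty_Iic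
            (fun k => d1 k ω - maxplus (fun i => a i ω) γ1 k) :=
      Finset.le_sup' (f := fun k => d1 k ω - maxplus (fun i => a i ω) γ1 k)
        (Finset.mem_Iic.mpr (le_trans hk hm))
    have hS2 : d2 m ω - maxplus (fun i => d1 i ω) γ2 m
        ≤ (Finset.Iic n).sup' Finset.nonempty_Iic
            (fun m => d2 m ω - maxplus (fun k => d1 k ω) γ2 m) :=
      Finset.le_sup' (f := fun m => d2 m ω - maxplus (fun k => d1 k ω) γ2 m)
        (Finset.mem_Iic.mpr hm)
    have hAk : maxplus (fun i => a i ω) γ1 k = a j ω + γ1 (k - j) := hjeq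
    have hDm : maxplus (fun i => d1 i ω) γ2 m = d1 k ω + γ2 (m - k) := hkeq
    have : d2 m ω - maxplus (fun i => a i ω) (maxplus γ1 γ2) m
        ≤ (d1 k ω - maxplus (fun i => a i ω) γ1 k)
          + (d2 m ω - maxplus (fun i => d1 i ω) γ2 m) := by
      rw [hAk, hDm]; linarith
    linarith
  refine ⟨key, ?_⟩
  intro n x hx
  have hne : Nonempty (Set.Icc (0 : ℝ) x) := ⟨⟨0, le_refl 0, hx⟩⟩
  rw [minplus]
  apply le_ciInf
  rintro ⟨y, hy0, hyx⟩
  simp only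
  have hsub : {ω | (Finset.Iic n).sup' Finset.nonempty_Iic
          (fun m => d2 m ω - maxplus (fun k => a k ω) (maxplus γ1 γ2) m) > x}
      ⊆ {ω | (Finset.Iic n).sup' Finset.nonempty_Iic
          (fun m => d1 m ω - maxplus (fun k => a k ω) γ1 m) > y}
        ∪ {ω | (Finset.Iic n).sup' Finset.nonempty_Iic
          (fun m => d2 m ω - maxplus (fun k => d1 k ω) γ2 m) > x - y} := by
    intro ω hω
    simp only [Set.mem_setOf_eq] at hω
    by_contra hc
    simp only [Set.mem_union, Set.mem_setOf_eq, not_or, not_lt] at hc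
    have := key ω n
    linarith
  calc (P {ω | (Finset.Iic n).sup' Finset.nonempty_Iic
          (fun m => d2 m ω - maxplus (fun k => a k ω) (maxplus γ1 γ2) m) > x}).toReal
      ≤ (P ({ω | (Finset.Iic n).sup' Finset.nonempty_Iic
          (fun m => d1 m ω - maxplus (fun k => a k ω) γ1 m) > y}
        ∪ {ω | (Finset.Iic n).sup' Finset.nonempty_Iic
          (fun m => d2 m ω - maxplus (fun k => d1 k ω) γ2 m) > x - y})).toReal := by
        apply ENNReal.toReal_mono (measure_ne_top P _) (measure_mono hsub)
    _ ≤ (P {ω | (Finset.Iic n).sup' Finset.nonempty_Iic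
          (fun m => d1 m ω - maxplus (fun k => a k ω) γ1 m) > y}).toReal
        + (P {ω | (Finset.Iic n).sup' Finset.nonempty_Iic
          (fun m => d2 m ω - maxplus (fun k => d1 k ω) γ2 m) > x - y}).toReal := by
        rw [← ENNReal.toReal_add (measure_ne_top P _) (measure_ne_top P _)]
        exact ENNReal.toReal_mono (by finiteness) (measure_union_le _ _)
    _ ≤ j1 y + j2 (x - y) := add_le_add (hcs1 n y hy0) (hcs2 n (x - y) (by linarith))
end
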